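/- For two qubits, the common kernel of the two operators |↓⟩⟨↓|_1 ⊗ (1 − |ι⟩⟨ι|)_2 and (1 − |ι⟩⟨ι|)_1 ⊗ |↓⟩⟨↓|_2 acting on (C² ⊗ C²)^{⊗2} (each factor a rung of two qubits), where |ι⟩ = (|↑↑⟩ + |↓↓⟩)/√2 and |↓⟩⟨↓| acts on one leg only, together with the rung-alignment constraint, intersected over all adjacent pairs of an L-site chain, is exactly 2-dimensional: it is spanned by |↑̃⟩^{⊗L} and |→̃⟩^{⊗L}, where |↑̃⟩ = |↑↑⟩ and |→̃⟩ = (|↑↑⟩+|↓↓⟩)/√2 are composite rung states. -/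

import Mathlib

open Matrix

namespace IsolatedQMBS

noncomputable section

/-- A rung of the ladder: a pair of qubit states (top leg, bottom leg). -/
abbrev Rung := Fin 2 × Fin 2

/-- Ladder configurations of length `L`. -/
abbrev Conf (L : ℕ) := Fin L → Rung

/-- The composite rung state `|↓̃⟩ = |↓⟩_t|↓⟩_b`. -/
def dnT : Rung → ℂ := fun r => if r = (1, 1) then 1 else 0

/-- The composite rung state `|←̃⟩ = (|↑̃⟩ − |↓̃⟩)/√2`. -/
def ltT : Rung → ℂ := fun r =>
  if r = (0, 0) then ((Real.sqrt 2)⁻¹ : ℂ)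
  else if r = (1, 1) then -((Real.sqrt 2)⁻¹ : ℂ) else 0

/-- The projector `|u, w⟩⟨u, w|` onto the product rung state `u ⊗ w` at rungs
`(j, j+1)`, acting as the identity elsewhere. -/
def pairProj {L : ℕ} [NeZero L] (j : Fin L) (u w : Rung → ℂ) :
    Matrix (Conf L) (Conf L) ℂ :=
  Matrix.of fun p q =>
    if ∀ i, i ≠ j → i ≠ j + 1 → p i = q i then
      (u (p j) * w (p (j + 1))) * star (u (q j) * w (q (j + 1))) else 0

/-- The all-up product state `|↑̃⟩^{⊗L}`, `|↑̃⟩ = |↑↑⟩`. -/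
def vUp (L : ℕ) : Conf L → ℂ := fun s => if ∀ j, s j = (0, 0) then 1 else 0

/-- The product state `|→̃⟩^{⊗L}` with `|→̃⟩ = (|↑↑⟩ + |↓↓⟩)/√2`. -/
def vRt (L : ℕ) : Conf L → ℂ := fun s =>
  if ∀ j, (s j).1 = (s j).2 then ((Real.sqrt 2)⁻¹ : ℂ) ^ L else 0

section Aux
variable {L : ℕ} [NeZero L]

lemma c2_ne : ((Real.sqrt 2)⁻¹ : ℂ) ≠ 0 := by
  have : Real.sqrt 2 ≠ 0 := by positivity
  simp [Complex.ofReal_ne_zero, this]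

lemma rung_cases : ∀ r : Rung, r.1 = r.2 → r = (0,0) ∨ r = (1,1) := by decide

def Bcfg (j : Fin L) (v : Rung) (p : Conf L) : Conf L :=
  Function.update (Function.update p j (1,1)) (j+1) v

lemma Bcfg_j (j : Fin L) (hne : j + 1 ≠ j) (v : Rung) (p : Conf L) : Bcfg j v p j = (1,1) := by
  rw [Bcfg, Function.update_of_ne (Ne.symm hne), Function.update_self]

lemma Bcfg_j1 (j : Fin L) (v : Rung) (p : Conf L) : Bcfg j v p (j+1) = v := by
  rw [Bcfg, Function.update_self]

lemma Bcfg_off (j : Fin L) (v : Rung) (p : Conf L) {i : Fin L} (h1 : i ≠ j) (h2 : i ≠ j + 1) :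
    Bcfg j v p i = p i := by
  rw [Bcfg, Function.update_of_ne h2, Function.update_of_ne h1]

def Ccfg (j : Fin L) (v : Rung) (p : Conf L) : Conf L :=
  Function.update (Function.update p (j+1) (1,1)) j v

lemma Ccfg_j (j : Fin L) (v : Rung) (p : Conf L) : Ccfg j v p j = v := by
  rw [Ccfg, Function.update_self]

lemma Ccfg_j1 (j : Fin L) (hne : j + 1 ≠ j) (v : Rung) (p : Conf L) : Ccfg j v p (j+1) = (1,1) := by
  rw [Ccfg, Function.update_of_ne hne, Function.update_self]

lemma Ccfg_off (j : Fin L) (v : Rung) (p : Conf L) {i : Fin L} (h1 : i ≠ j) (h2 : i ≠ j + 1) :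
    Ccfg j v p i = p i := by
  rw [Ccfg, Function.update_of_ne h1, Function.update_of_ne h2]

lemma star_eval0 : star (dnT (1,1) * ltT (0,0)) = ((Real.sqrt 2)⁻¹ : ℂ) := by
  norm_num [dnT, ltT, Complex.star_def, Complex.conj_ofReal, map_inv₀]

lemma star_eval1 : star (dnT (1,1) * ltT (1,1)) = -((Real.sqrt 2)⁻¹ : ℂ) := by
  norm_num [dnT, ltT, Complex.star_def, Complex.conj_ofReal, map_inv₀]

lemma star_eval0' : star (ltT (0,0) * dnT (1,1)) = ((Real.sqrt 2)⁻¹ : ℂ) := by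
  norm_num [dnT, ltT, Complex.star_def, Complex.conj_ofReal, map_inv₀]

lemma star_eval1' : star (ltT (1,1) * dnT (1,1)) = -((Real.sqrt 2)⁻¹ : ℂ) := by
  norm_num [dnT, ltT, Complex.star_def, Complex.conj_ofReal, map_inv₀]

lemma sum_dl (j : Fin L) (hne : j + 1 ≠ j) (p : Conf L) (g : Conf L → ℂ) :
    ∑ q : Conf L, pairProj j dnT ltT p q * g q
      = dnT (p j) * ltT (p (j + 1)) *
        (((Real.sqrt 2)⁻¹ : ℂ) * g (Bcfg j (0,0) p)
         - ((Real.sqrt 2)⁻¹ : ℂ) * g (Bcfg j (1,1) p)) := by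
  have hB0ne : Bcfg j (0,0) p ≠ Bcfg j (1,1) p := by
    intro h
    have := congrFun h (j+1)
    rw [Bcfg_j1, Bcfg_j1] at this
    exact absurd this (by decide)
  rw [Finset.sum_eq_add (Bcfg j (0,0) p) (Bcfg j (1,1) p) hB0ne ?_
    (fun h => absurd (Finset.mem_univ _) h) (fun h => absurd (Finset.mem_univ _) h)]
  · have hc0 : ∀ i, i ≠ j → i ≠ j + 1 → p i = Bcfg j (0,0) p i := fun i h1 h2 =>
      (Bcfg_off j _ p h1 h2).symm
    have hc1 : ∀ i, i ≠ j → i ≠ j + 1 → p i = Bcfg j (1,1) p i := fun i h1 h2 =>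
      (Bcfg_off j _ p h1 h2).symm
    simp only [pairProj, Matrix.of_apply, if_pos hc0, if_pos hc1,
      Bcfg_j j hne, Bcfg_j1, star_eval0, star_eval1]
    ring
  · rintro k - ⟨hk0, hk1⟩
    simp only [pairProj, Matrix.of_apply]
    split_ifs with hc
    · have hkey : ∀ v : Rung, k j = (1,1) → k (j+1) = v → k = Bcfg j v p := by
        intro v hj hj1
        funext i
        by_cases h2 : i = j + 1
        · rw [h2, Bcfg_j1]; exact hj1
        by_cases h1 : i = j
        · rw [h1, Bcfg_j j hne]; exact hj
        · rw [Bcfg_off j v p h1 h2, ← hc i h1 h2]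
      rcases eq_or_ne (k j) (1,1) with hkj | hkj
      · rcases eq_or_ne (k (j+1)) (0,0) with hkj1 | hkj1
        · exact absurd (hkey _ hkj hkj1) hk0
        rcases eq_or_ne (k (j+1)) (1,1) with hkj1' | hkj1'
        · exact absurd (hkey _ hkj hkj1') hk1
        · have : ltT (k (j+1)) = 0 := by
            rw [ltT]; rw [if_neg hkj1, if_neg hkj1']
          simp [this]
      · have : dnT (k j) = 0 := by rw [dnT, if_neg hkj]
        simp [this]
    · simp

lemma sum_ld (j : Fin L) (hne : j + 1 ≠ j) (p : Conf L) (g : Conf L → ℂ) :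
    ∑ q : Conf L, pairProj j ltT dnT p q * g q
      = ltT (p j) * dnT (p (j + 1)) *
        (((Real.sqrt 2)⁻¹ : ℂ) * g (Ccfg j (0,0) p)
         - ((Real.sqrt 2)⁻¹ : ℂ) * g (Ccfg j (1,1) p)) := by
  have hC0ne : Ccfg j (0,0) p ≠ Ccfg j (1,1) p := by
    intro h
    have := congrFun h j
    rw [Ccfg_j, Ccfg_j] at this
    exact absurd this (by decide)
  rw [Finset.sum_eq_add (Ccfg j (0,0) p) (Ccfg j (1,1) p) hC0ne ?_
    (fun h => absurd (Finset.mem_univ _) h) (fun h => absurd (Finset.mem_univ _) h)]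
  · have hc0 : ∀ i, i ≠ j → i ≠ j + 1 → p i = Ccfg j (0,0) p i := fun i h1 h2 =>
      (Ccfg_off j _ p h1 h2).symm
    have hc1 : ∀ i, i ≠ j → i ≠ j + 1 → p i = Ccfg j (1,1) p i := fun i h1 h2 =>
      (Ccfg_off j _ p h1 h2).symm
    simp only [pairProj, Matrix.of_apply, if_pos hc0, if_pos hc1,
      Ccfg_j1 j hne, Ccfg_j, star_eval0', star_eval1']
    ring
  · rintro k - ⟨hk0, hk1⟩
    simp only [pairProj, Matrix.of_apply]
    split_ifs with hc
    · have hkey : ∀ v : Rung, k (j+1) = (1,1) → k j = v → k = Ccfg j v p := by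
        intro v hj1 hj
        funext i
        by_cases h1 : i = j
        · rw [h1, Ccfg_j]; exact hj
        by_cases h2 : i = j + 1
        · rw [h2, Ccfg_j1 j hne]; exact hj1
        · rw [Ccfg_off j v p h1 h2, ← hc i h1 h2]
      rcases eq_or_ne (k (j+1)) (1,1) with hkj1 | hkj1
      · rcases eq_or_ne (k j) (0,0) with hkj | hkj
        · exact absurd (hkey _ hkj1 hkj) hk0
        rcases eq_or_ne (k j) (1,1) with hkj' | hkj'
        · exact absurd (hkey _ hkj1 hkj') hk1
        · have : ltT (k j) = 0 := by
            rw [ltT]; rw [if_neg hkj, if_neg hkj']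
          simp [this]
      · have : dnT (k (j+1)) = 0 := by rw [dnT, if_neg hkj1]
        simp [this]
    · simp


lemma key1 (j : Fin L) (hne : j + 1 ≠ j) (ψ : Conf L → ℂ)
    (h : (pairProj j dnT ltT).mulVec ψ = 0) (s : Conf L) (hs : s j = (1,1)) :
    ψ (Function.update s (j+1) ((0,0) : Rung)) = ψ (Function.update s (j+1) ((1,1) : Rung)) := by
  set p := Function.update s (j+1) ((0,0) : Rung) with hp
  have hpj : p j = ((1,1) : Rung) := by rw [hp, Function.update_of_ne (Ne.symm hne), hs]
  have hpj1 : p (j+1) = ((0,0) : Rung) := by rw [hp, Function.update_self]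
  have hB : ∀ v : Rung, Bcfg j v p = Function.update s (j+1) v := by
    intro v
    rw [Bcfg, show ((1,1) : Rung) = p j from hpj.symm, Function.update_eq_self, hp,
      Function.update_idem]
  have hmv := congrFun h p
  simp only [Matrix.mulVec, dotProduct, Pi.zero_apply] at hmv
  rw [sum_dl j hne p ψ, hpj, hpj1,
    show dnT (1,1) = 1 from by norm_num [dnT],
    show ltT (0,0) = ((Real.sqrt 2)⁻¹ : ℂ) from by norm_num [ltT], one_mul, hB, hB] at hmv
  rcases mul_eq_zero.mp hmv with h' | h'
  · exact absurd h' c2_ne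
  · exact mul_left_cancel₀ c2_ne (sub_eq_zero.mp h')

lemma dl_vUp (j : Fin L) (hne : j + 1 ≠ j) :
    (pairProj j dnT ltT).mulVec (vUp L) = 0 := by
  funext p
  simp only [Matrix.mulVec, dotProduct, Pi.zero_apply]
  rw [sum_dl j hne]
  have h0 : ∀ v : Rung, vUp L (Bcfg j v p) = 0 := by
    intro v
    rw [vUp, if_neg]
    intro hall
    have := hall j
    rw [Bcfg_j j hne] at this
    exact absurd this (by decide)
  rw [h0, h0]; ring

lemma ld_vUp (j : Fin L) (hne : j + 1 ≠ j) :
    (pairProj j ltT dnT).mulVec (vUp L) = 0 := by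
  funext p
  simp only [Matrix.mulVec, dotProduct, Pi.zero_apply]
  rw [sum_ld j hne]
  have h0 : ∀ v : Rung, vUp L (Ccfg j v p) = 0 := by
    intro v
    rw [vUp, if_neg]
    intro hall
    have := hall (j+1)
    rw [Ccfg_j1 j hne] at this
    exact absurd this (by decide)
  rw [h0, h0]; ring

lemma dl_vRt (j : Fin L) (hne : j + 1 ≠ j) :
    (pairProj j dnT ltT).mulVec (vRt L) = 0 := by
  funext p
  simp only [Matrix.mulVec, dotProduct, Pi.zero_apply]
  rw [sum_dl j hne]
  have hagree : ∀ (v v' : Rung) (i : Fin L), i ≠ j + 1 → Bcfg j v p i = Bcfg j v' p i := by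
    intro v v' i h2
    rw [Bcfg, Bcfg, Function.update_of_ne h2, Function.update_of_ne h2]
  have heq : vRt L (Bcfg j ((0,0) : Rung) p) = vRt L (Bcfg j ((1,1) : Rung) p) := by
    rw [vRt]
    refine if_congr ?_ rfl rfl
    constructor <;> intro h i <;> by_cases h2 : i = j + 1
    · rw [h2, Bcfg_j1]
    · rw [hagree _ (0,0) i h2]; exact h i
    · rw [h2, Bcfg_j1]
    · rw [hagree _ (1,1) i h2]; exact h i
  rw [heq, sub_self, mul_zero]

lemma ld_vRt (j : Fin L) (hne : j + 1 ≠ j) :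
    (pairProj j ltT dnT).mulVec (vRt L) = 0 := by
  funext p
  simp only [Matrix.mulVec, dotProduct, Pi.zero_apply]
  rw [sum_ld j hne]
  have hagree : ∀ (v v' : Rung) (i : Fin L), i ≠ j → Ccfg j v p i = Ccfg j v' p i := by
    intro v v' i h1
    rw [Ccfg, Ccfg, Function.update_of_ne h1, Function.update_of_ne h1]
  have heq : vRt L (Ccfg j ((0,0) : Rung) p) = vRt L (Ccfg j ((1,1) : Rung) p) := by
    rw [vRt]
    refine if_congr ?_ rfl rfl
    constructor <;> intro h i <;> by_cases h1 : i = j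
    · rw [h1, Ccfg_j]
    · rw [hagree _ (0,0) i h1]; exact h i
    · rw [h1, Ccfg_j]
    · rw [hagree _ (1,1) i h1]; exact h i
  rw [heq, sub_self, mul_zero]


lemma add_one_ne (hL : 2 ≤ L) (j : Fin L) : j + 1 ≠ j := by
  obtain ⟨m, rfl⟩ : ∃ m, L = m + 2 := ⟨L - 2, by omega⟩
  intro h
  have h1 : (1 : Fin (m + 2)) = 0 := by
    have := congrArg (fun x => x - j) h
    simpa [add_sub_cancel_left, add_comm] using this
  have := congrArg Fin.val h1
  simp [Fin.val_one] at this

open Fin.NatCast in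
lemma reach (hne : ∀ j : Fin L, j + 1 ≠ j) (ψ : Conf L → ℂ)
    (hker : ∀ j, (pairProj j dnT ltT).mulVec ψ = 0)
    (s : Conf L) (hal : ∀ j, (s j).1 = (s j).2)
    (j₀ : Fin L) (h0 : s j₀ = (1,1)) :
    ψ s = ψ (fun _ => ((1,1) : Rung)) := by
  classical
  set D : ℕ → Conf L := fun m i => if ∃ t ≤ m, i = j₀ + (t : Fin L) then (1,1) else s i with hD
  have hD0 : D 0 = s := by
    funext i
    rw [hD]; dsimp only
    split_ifs with h
    · obtain ⟨t, ht, hit⟩ := h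
      have ht0 : t = 0 := Nat.le_zero.mp ht
      subst ht0
      have : i = j₀ := by simpa using hit
      rw [this, h0]
    · rfl
  have hDal : ∀ m i, ((D m i).1 = (D m i).2) := by
    intro m i
    rw [hD]; dsimp only
    split_ifs with h
    · rfl
    · exact hal i
  have hstep : ∀ m, ψ (D m) = ψ (D (m+1)) := by
    intro m
    set j : Fin L := j₀ + (m : Fin L) with hj
    have hcast : ((m + 1 : ℕ) : Fin L) = (m : Fin L) + 1 := by push_cast; ring
    have hDmj : D m j = (1,1) := by
      rw [hD]; dsimp only; rw [if_pos ⟨m, le_refl m, rfl⟩]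
    have hDm1 : ∀ i, D (m+1) i = if i = j + 1 then ((1,1) : Rung) else D m i := by
      intro i
      by_cases h2 : i = j + 1
      · rw [if_pos h2, hD]; dsimp only
        rw [if_pos ⟨m+1, le_refl _, by rw [h2, hj, hcast, add_assoc]⟩]
      · rw [if_neg h2, hD]; dsimp only
        by_cases hex : ∃ t ≤ m, i = j₀ + (t : Fin L)
        · rw [if_pos hex, if_pos]
          obtain ⟨t, ht, hit⟩ := hex
          exact ⟨t, le_trans ht (Nat.le_succ m), hit⟩
        · rw [if_neg hex, if_neg]
          rintro ⟨t, ht, hit⟩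
          rcases Nat.lt_or_ge t (m+1) with hlt | hge
          · exact hex ⟨t, Nat.lt_succ_iff.mp hlt, hit⟩
          · have : t = m + 1 := le_antisymm ht hge
            subst this
            exact h2 (by rw [hit, hcast, ← add_assoc, ← hj])
    have hsucc : Function.update (D m) (j+1) ((1,1) : Rung) = D (m+1) := by
      funext i
      rw [hDm1 i]
      by_cases h2 : i = j + 1
      · rw [if_pos h2, h2, Function.update_self]
      · rw [if_neg h2, Function.update_of_ne h2]
    have hk := key1 j (hne j) ψ (hker j) (D m) hDmj
    rcases rung_cases (D m (j+1)) (hDal m (j+1)) with h | h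
    · rw [show ((0,0) : Rung) = D m (j+1) from h.symm, Function.update_eq_self] at hk
      rw [hk, hsucc]
    · have : D (m+1) = D m := by
        rw [← hsucc, show ((1,1) : Rung) = D m (j+1) from h.symm, Function.update_eq_self]
      rw [this]
  have hall : ∀ m, ψ s = ψ (D m) := by
    intro m
    induction m with
    | zero => rw [hD0]
    | succ n ih => exact ih.trans (hstep n)
  have hlast : D (L-1) = fun _ => ((1,1) : Rung) := by
    funext i
    rw [hD]; dsimp only
    rw [if_pos]
    refine ⟨((i - j₀ : Fin L) : ℕ), ?_, ?_⟩
    · have := (i - j₀).isLt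
      omega
    · rw [Fin.cast_val_eq_self, add_comm, sub_add_cancel]
  rw [hall (L-1), hlast]


lemma vUp_allUp : vUp L (fun _ => ((0,0) : Rung)) = 1 := by
  rw [vUp, if_pos (fun j => rfl)]

lemma vRt_allUp : vRt L (fun _ => ((0,0) : Rung)) = ((Real.sqrt 2)⁻¹ : ℂ) ^ L := by
  rw [vRt, if_pos (fun j => rfl)]

lemma vUp_allDn : vUp L (fun _ => ((1,1) : Rung)) = 0 := by
  rw [vUp, if_neg]
  intro h
  exact absurd (h ⟨0, Nat.pos_of_ne_zero (NeZero.ne L)⟩) (by decide)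

lemma vRt_allDn : vRt L (fun _ => ((1,1) : Rung)) = ((Real.sqrt 2)⁻¹ : ℂ) ^ L := by
  rw [vRt, if_pos (fun j => rfl)]

lemma vUp_mis {s : Conf L} {j : Fin L} (hj : (s j).1 ≠ (s j).2) : vUp L s = 0 := by
  rw [vUp, if_neg]
  intro h
  exact hj (by rw [h j])

lemma vRt_mis {s : Conf L} {j : Fin L} (hj : (s j).1 ≠ (s j).2) : vRt L s = 0 := by
  rw [vRt, if_neg]
  intro h
  exact hj (h j)

end Aux

/-- The common kernel of the projectors `|↓̃,←̃⟩⟨↓̃,←̃|_{j,j+1}` and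
`|←̃,↓̃⟩⟨←̃,↓̃|_{j,j+1}` over all adjacent pairs, together with the rung-alignment
constraint, is exactly 2-dimensional: it is spanned by `|↑̃⟩^{⊗L}` and `|→̃⟩^{⊗L}`. -/
theorem isolated_qmbs_kernel (L : ℕ) [NeZero L] (hL : 2 ≤ L) :
    (∀ ψ : Conf L → ℂ,
        ((∀ s, (∃ j, (s j).1 ≠ (s j).2) → ψ s = 0) ∧
          (∀ j, (pairProj j dnT ltT).mulVec ψ = 0) ∧
          (∀ j, (pairProj j ltT dnT).mulVec ψ = 0))
          ↔ ψ ∈ Submodule.span ℂ {vUp L, vRt L}) ∧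
    LinearIndependent ℂ ![vUp L, vRt L] := by
  have hne : ∀ j : Fin L, j + 1 ≠ j := add_one_ne hL
  have hpow : ((Real.sqrt 2)⁻¹ : ℂ) ^ L ≠ 0 := pow_ne_zero _ c2_ne
  constructor
  · intro ψ
    constructor
    · rintro ⟨hA, hDL, _⟩
      rw [Submodule.mem_span_pair]
      refine ⟨ψ (fun _ => ((0,0) : Rung)) - ψ (fun _ => ((1,1) : Rung)),
        ψ (fun _ => ((1,1) : Rung)) * (((Real.sqrt 2)⁻¹ : ℂ) ^ L)⁻¹, ?_⟩
      funext s
      simp only [Pi.add_apply, Pi.smul_apply, smul_eq_mul]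
      by_cases hal : ∀ j, (s j).1 = (s j).2
      · by_cases hup : ∀ j, s j = ((0,0) : Rung)
        · have hs : s = fun _ => ((0,0) : Rung) := funext hup
          rw [vUp, if_pos hup, vRt, if_pos hal, hs, mul_one]
          field_simp
          ring
        · push_neg at hup
          obtain ⟨j₀, hj₀⟩ := hup
          have hsj₀ : s j₀ = ((1,1) : Rung) := by
            rcases rung_cases (s j₀) (hal j₀) with h | h
            exacts [absurd h hj₀, h]
          have hψs : ψ s = ψ (fun _ => ((1,1) : Rung)) := reach hne ψ hDL s hal j₀ hsj₀
          have hnup : ¬ ∀ j, s j = ((0,0) : Rung) := by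
            intro h
            rw [h j₀] at hsj₀
            exact absurd hsj₀ (by decide)
          rw [vUp, if_neg hnup, vRt, if_pos hal, hψs, mul_zero, zero_add]
          field_simp
      · push_neg at hal
        obtain ⟨j, hj⟩ := hal
        rw [hA s ⟨j, hj⟩, vUp_mis hj, vRt_mis hj, mul_zero, mul_zero, add_zero]
    · rw [Submodule.mem_span_pair]
      rintro ⟨α, β, rfl⟩
      refine ⟨?_, ?_, ?_⟩
      · intro s hs
        obtain ⟨j, hj⟩ := hs
        simp [vUp_mis hj, vRt_mis hj]
      · intro j
        rw [Matrix.mulVec_add, Matrix.mulVec_smul, Matrix.mulVec_smul,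
          dl_vUp j (hne j), dl_vRt j (hne j), smul_zero, smul_zero, add_zero]
      · intro j
        rw [Matrix.mulVec_add, Matrix.mulVec_smul, Matrix.mulVec_smul,
          ld_vUp j (hne j), ld_vRt j (hne j), smul_zero, smul_zero, add_zero]
  · rw [LinearIndependent.pair_iff]
    intro a b hab
    have h1 := congrFun hab (fun _ => ((1,1) : Rung))
    have h2 := congrFun hab (fun _ => ((0,0) : Rung))
    simp only [Pi.add_apply, Pi.smul_apply, smul_eq_mul, Pi.zero_apply,
      vUp_allDn, vRt_allDn, vUp_allUp, vRt_allUp, mul_zero, zero_add, mul_one] at h1 h2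
    have hb : b = 0 := by
      rcases mul_eq_zero.mp h1 with h | h
      exacts [h, absurd h hpow]
    subst hb
    constructor
    · simpa using h2
    · rfl

end
end IsolatedQMBS
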